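/- In the formal power series ring ℚ[[x,y]], Σ_{k=0}^{∞} Σ_{m=0}^{∞} ( Σ_{i=0}^{min(k,m)} (i!)² · S_{k+1,i+1} · S_{m+1,i+1} ) · x^k y^m / (k! m!) = e^{x+y} / (e^x + e^y − e^{x+y}), where S_{a,b} are the Stirling numbers of the second kind. (The inner sum Σ_i (i!)² S_{k+1,i+1} S_{m+1,i+1} is the number of elements of the Bruhat interval [id,w] in S_{k+m}, where w is the maximal element of A_{k+m−1}^{S∖{s_k}}.) -/

import Mathlib

open Finset

/-- A board: the set of one-entries (cells) of a zero-one matrix, as (row, column) pairs. -/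
abbrev Board := Finset (ℕ × ℕ)

/-- The full `m × n` grid of cells. -/
def grid (m n : ℕ) : Board := Finset.range m ×ˢ Finset.range n

/-- The (non-taking) rook configurations on the board `A` with `k` rooks. -/
def rookConfigs (A : Board) (k : ℕ) : Finset Board :=
  A.powerset.filter fun C =>
    C.card = k ∧ ∀ c ∈ C, ∀ c' ∈ C, c ≠ c' → c.1 ≠ c'.1 ∧ c.2 ≠ c'.2

/-- `invStat m n C`: the number of (not necessarily positive) cells of an `m × n` matrix
having no rook of the configuration `C` weakly to the right in the same row nor weakly
below in the same column. -/
def invStat (m n : ℕ) (C : Board) : ℕ :=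
  ((grid m n).filter fun a =>
    (∀ c ∈ C, c.1 = a.1 → c.2 < a.2) ∧ (∀ c ∈ C, c.2 = a.2 → c.1 < a.1)).card

/-- The `k`-th `q`-rook number of a board `A` of ambient matrix size `m × n`. -/
def qRook {F : Type*} [CommSemiring F] (q : F) (m n : ℕ) (A : Board) (k : ℕ) : F :=
  ∑ C ∈ rookConfigs A k, q ^ invStat m n C

/-- The `q`-analogue `[x]_q = 1 + q + ⋯ + q^(x-1)`. -/
def qInt {F : Type*} [CommSemiring F] (q : F) (x : ℕ) : F := ∑ i ∈ Finset.range x, q ^ i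

/-- The `q`-factorial `[n]!_q = [1]_q [2]_q ⋯ [n]_q`. -/
def qFact {F : Type*} [CommSemiring F] (q : F) (n : ℕ) : F := ∏ i ∈ Finset.range n, qInt q (i + 1)

/-- The `q`-Stirling numbers `S_{n,k}(q)` of Garsia and Remmel. -/
def qStirling {F : Type*} [CommSemiring F] (q : F) : ℕ → ℕ → F
  | 0, 0 => 1
  | 0, _ + 1 => 0
  | n + 1, k => (if k = 0 then 0 else q ^ (k - 1) * qStirling q n (k - 1)) + qInt q k * qStirling q n k

/-- Stirling numbers of the second kind. -/
def stirling2 : ℕ → ℕ → ℕ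
  | 0, 0 => 1
  | 0, _ + 1 => 0
  | n + 1, k => (if k = 0 then 0 else stirling2 n (k - 1)) + k * stirling2 n k

/-- The board `A` covers the rook configuration of the permutation `π`
(a rook at `(i, π i)` for every row `i`, zero-indexed). -/
def Covers {n : ℕ} (A : Board) (π : Equiv.Perm (Fin n)) : Prop :=
  ∀ i : Fin n, ((i : ℕ), (π i : ℕ)) ∈ A

/-- `bruhatRank π i j` is the number of rooks of `π` weakly north-east of cell `(i,j)`,
i.e. `|{a ≤ i : π a ≥ j}|`. -/
def bruhatRank {n : ℕ} (π : Equiv.Perm (Fin n)) (i j : Fin n) : ℕ :=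
  (Finset.univ.filter fun a : Fin n => a ≤ i ∧ j ≤ π a).card

/-- Bruhat order on the symmetric group, via the standard (Ehresmann) rank criterion. -/
def BruhatLE {n : ℕ} (u w : Equiv.Perm (Fin n)) : Prop :=
  ∀ i j : Fin n, bruhatRank u i j ≤ bruhatRank w i j


instance {n : ℕ} (A : Board) (π : Equiv.Perm (Fin n)) : Decidable (Covers A π) :=
  inferInstanceAs (Decidable (∀ i : Fin n, ((i : ℕ), (π i : ℕ)) ∈ A))

instance {n : ℕ} (u w : Equiv.Perm (Fin n)) : Decidable (BruhatLE u w) :=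
  inferInstanceAs (Decidable (∀ i j : Fin n, bruhatRank u i j ≤ bruhatRank w i j))

/-- The number of inversions of a permutation (= its Coxeter length). -/
def inversions {n : ℕ} (π : Equiv.Perm (Fin n)) : ℕ :=
  (Finset.univ.filter fun p : Fin n × Fin n => p.1 < p.2 ∧ π p.2 < π p.1).card

/-- A right-aligned Ferrers matrix inside the `n × n` grid: every one-entry has one-entries
(weakly) to its right in the grid and above it. -/
def IsRightFerrers (n : ℕ) (A : Board) : Prop :=
  A ⊆ grid n n ∧ ∀ i j i' j' : ℕ, (i, j) ∈ A → i' ≤ i → j ≤ j' → j' < n → (i', j') ∈ A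

/-- A left-aligned Ferrers matrix inside the `n × n` grid. -/
def IsLeftFerrers (n : ℕ) (A : Board) : Prop :=
  A ⊆ grid n n ∧ ∀ i j i' j' : ℕ, (i, j) ∈ A → i' ≤ i → j' ≤ j → (i', j') ∈ A

/-- A right-aligned skew Ferrers matrix: an entrywise difference `λ - μ` of right-aligned
Ferrers matrices with `μ ≤ λ`. -/
def IsRightSkewFerrers (n : ℕ) (B : Board) : Prop :=
  ∃ L M : Board, IsRightFerrers n L ∧ IsRightFerrers n M ∧ M ⊆ L ∧ B = L \ M

/-- A left-aligned skew Ferrers matrix. -/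
def IsLeftSkewFerrers (n : ℕ) (B : Board) : Prop :=
  ∃ L M : Board, IsLeftFerrers n L ∧ IsLeftFerrers n M ∧ M ⊆ L ∧ B = L \ M

/-- `H` is the right hull of `π`: the smallest right-aligned skew Ferrers matrix covering `π`. -/
def IsRightHull {n : ℕ} (π : Equiv.Perm (Fin n)) (H : Board) : Prop :=
  IsRightSkewFerrers n H ∧ Covers H π ∧
    ∀ B : Board, IsRightSkewFerrers n B → Covers B π → H ⊆ B

/-- `H` is the left hull of `π`: the smallest left-aligned skew Ferrers matrix covering `π`. -/
def IsLeftHull {n : ℕ} (π : Equiv.Perm (Fin n)) (H : Board) : Prop :=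
  IsLeftSkewFerrers n H ∧ Covers H π ∧
    ∀ B : Board, IsLeftSkewFerrers n B → Covers B π → H ⊆ B

/-- `π` contains the pattern `σ`. -/
def ContainsPattern {n m : ℕ} (π : Equiv.Perm (Fin n)) (σ : Equiv.Perm (Fin m)) : Prop :=
  ∃ f : Fin m → Fin n, StrictMono f ∧ ∀ a b : Fin m, σ a < σ b ↔ π (f a) < π (f b)

/-- The pattern 4231 (one-line notation, here zero-indexed). -/
def p4231 : Equiv.Perm (Fin 4) := ⟨![3,1,2,0], ![3,1,2,0], by decide, by decide⟩
/-- The pattern 35142. -/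
def p35142 : Equiv.Perm (Fin 5) := ⟨![2,4,0,3,1], ![2,4,0,3,1], by decide, by decide⟩
/-- The pattern 42513. -/
def p42513 : Equiv.Perm (Fin 5) := ⟨![3,1,4,0,2], ![3,1,4,0,2], by decide, by decide⟩
/-- The pattern 351624. -/
def p351624 : Equiv.Perm (Fin 6) := ⟨![2,4,0,5,1,3], ![2,4,0,5,1,3], by decide, by decide⟩

/-- `π` avoids the four patterns 4231, 35142, 42513 and 351624. -/
def AvoidsThePatterns {n : ℕ} (π : Equiv.Perm (Fin n)) : Prop :=
  ¬ ContainsPattern π p4231 ∧ ¬ ContainsPattern π p35142 ∧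
    ¬ ContainsPattern π p42513 ∧ ¬ ContainsPattern π p351624

/-- Rotating an `m × n` board by 180 degrees. -/
def rot180 (m n : ℕ) (A : Board) : Board := A.image fun c => (m - 1 - c.1, n - 1 - c.2)

/-- Flipping an `m`-row board upside down. -/
def flipud (m : ℕ) (A : Board) : Board := A.image fun c => (m - 1 - c.1, c.2)

/-- The block matrix `B # A` with `B` (of size `nB × nB`) in the top-left corner, `A`
(of size `mA × mA`) in the bottom-right corner, and all-ones off-diagonal blocks. -/
def blockSharp (nB mA : ℕ) (B A : Board) : Board :=
  B ∪ Finset.range nB ×ˢ Finset.Ico nB (nB + mA) ∪ Finset.Ico nB (nB + mA) ×ˢ Finset.range nB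
    ∪ A.image fun c => (c.1 + nB, c.2 + nB)

/-- The 180-degree rotation of a permutation of `Fin n`: `π^↻ (i) = n - 1 - π (n - 1 - i)`. -/
def rot180Perm {n : ℕ} (π : Equiv.Perm (Fin n)) : Equiv.Perm (Fin n) :=
  (Fin.revPerm.trans π).trans Fin.revPerm

/-- The statistic `neg(π) = |{i ∈ [n+1, 2n] : π i ≤ n}|` (one-indexed) on `S_{2n}`. -/
def negStat (n : ℕ) (π : Equiv.Perm (Fin (2 * n))) : ℕ :=
  (Finset.univ.filter fun i : Fin (2 * n) => n ≤ (i : ℕ) ∧ (π i : ℕ) < n).card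

/-- `RB^M (q, t) = Σ_{π ∈ 𝔖ₙᴮ ∩ 𝔖(M)} q^{inv π} t^{neg π}` over rotationally symmetric
permutations of `S_{2n}` covered by the `2n × 2n` board `M`. -/
def RB {F : Type*} [CommSemiring F] (q t : F) (n : ℕ) (M : Board) : F :=
  ∑ π ∈ Finset.univ.filter fun π : Equiv.Perm (Fin (2 * n)) => rot180Perm π = π ∧ Covers M π,
    q ^ inversions π * t ^ negStat n π

/-- The triangular board `T_m` with ones on and above the secondary diagonal. -/
def Tboard (m : ℕ) : Board := (grid m m).filter fun c => c.1 + c.2 < m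

/-- The power series `e^x` in `ℚ[[x,y]]`. -/
def expX : MvPowerSeries (Fin 2) ℚ :=
  fun d => if d 1 = 0 then 1 / (Nat.factorial (d 0) : ℚ) else 0
/-- The power series `e^y` in `ℚ[[x,y]]`. -/
def expY : MvPowerSeries (Fin 2) ℚ :=
  fun d => if d 0 = 0 then 1 / (Nat.factorial (d 1) : ℚ) else 0
/-- The power series `e^(x+y)` in `ℚ[[x,y]]`. -/
def expXY : MvPowerSeries (Fin 2) ℚ :=
  fun d => 1 / ((Nat.factorial (d 0) : ℚ) * (Nat.factorial (d 1) : ℚ))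

lemma stirling2_zero (n : ℕ) : stirling2 (n + 1) 0 = 0 := by simp [stirling2]

lemma stirling2_succ (n k : ℕ) :
    stirling2 (n + 1) (k + 1) = stirling2 n k + (k + 1) * stirling2 n (k + 1) := by
  simp [stirling2]

lemma stirling2_eq_zero : ∀ n k : ℕ, n < k → stirling2 n k = 0 := by
  intro n
  induction n with
  | zero =>
    intro k h
    cases k with
    | zero => omega
    | succ k => rfl
  | succ n ih =>
    intro k h
    cases k with
    | zero => omega
    | succ k => rw [stirling2_succ, ih k (by omega), ih (k + 1) (by omega)]; ring

lemma stirling2_one : ∀ n : ℕ, stirling2 (n + 1) 1 = 1 := by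
  intro n
  induction n with
  | zero => rfl
  | succ n ih => rw [stirling2_succ, ih, stirling2_zero]

lemma pascal_sum (k : ℕ) (h : ℕ → ℕ) :
    ∑ a ∈ Finset.range (k + 2), (k + 1).choose a * h a
      = ∑ a ∈ Finset.range (k + 1), k.choose a * h a
        + ∑ a ∈ Finset.range (k + 1), k.choose a * h (a + 1) := by
  rw [Finset.sum_range_succ' _ (k + 1), Finset.sum_range_succ' (fun a => k.choose a * h a) k]
  simp only [Nat.choose_succ_succ, add_mul, Nat.choose_zero_right, one_mul]
  rw [Finset.sum_add_distrib]
  have h1 : ∑ a ∈ Finset.range (k + 1), k.choose (a + 1) * h (a + 1)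
      = ∑ a ∈ Finset.range k, k.choose (a + 1) * h (a + 1) := by
    rw [Finset.sum_range_succ, Nat.choose_succ_self, zero_mul, add_zero]
  rw [h1]; ring

lemma sum_choose_stirling : ∀ k j : ℕ,
    ∑ a ∈ Finset.range (k + 1), k.choose a * stirling2 (a + 1) j
      = stirling2 (k + 1) j + j * stirling2 (k + 1) (j + 1) := by
  intro k
  induction k with
  | zero =>
    intro j
    simp only [Finset.sum_range_succ, Finset.sum_range_zero, Nat.choose_self, one_mul, zero_add]
    cases j with
    | zero => decide
    | succ j =>
      cases j with
      | zero => decide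
      | succ j => rw [stirling2_eq_zero 1 (j + 1 + 1 + 1) (by omega)]; ring
  | succ k ih =>
    intro j
    rw [show k + 1 + 1 = k + 2 from rfl, pascal_sum k (fun a => stirling2 (a + 1) j)]
    cases j with
    | zero => simp [stirling2_zero]
    | succ j =>
      have h2 : ∑ a ∈ Finset.range (k + 1), k.choose a * stirling2 (a + 1 + 1) (j + 1)
          = (∑ a ∈ Finset.range (k + 1), k.choose a * stirling2 (a + 1) j)
            + (j + 1) * ∑ a ∈ Finset.range (k + 1), k.choose a * stirling2 (a + 1) (j + 1) := by
        rw [Finset.mul_sum, ← Finset.sum_add_distrib]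
        refine Finset.sum_congr rfl fun a _ => ?_
        rw [stirling2_succ]; ring
      rw [h2, ih j, ih (j + 1), stirling2_succ (k + 1) j, stirling2_succ (k + 1) (j + 1)]
      ring

def Sq (n i : ℕ) : ℚ := (stirling2 (n + 1) (i + 1) : ℚ)

lemma hP (n i : ℕ) :
    ∑ a ∈ Finset.range (n + 1), (n.choose a : ℚ) * Sq a i
      = Sq n i + ((i : ℚ) + 1) * Sq n (i + 1) := by
  have h2 := congrArg (Nat.cast : ℕ → ℚ) (sum_choose_stirling n (i + 1))
  push_cast at h2
  simpa [Sq] using h2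

lemma sum_div_fact (k : ℕ) (g : ℕ → ℚ) :
    ∑ a ∈ Finset.range (k + 1), g a / ((Nat.factorial a : ℚ) * (Nat.factorial (k - a) : ℚ))
      = (∑ a ∈ Finset.range (k + 1), (k.choose a : ℚ) * g a) / (Nat.factorial k : ℚ) := by
  rw [Finset.sum_div]
  refine Finset.sum_congr rfl fun a ha => ?_
  have ha' : a ≤ k := Nat.lt_succ_iff.mp (Finset.mem_range.mp ha)
  have h : (k.choose a : ℚ) * (Nat.factorial a : ℚ) * (Nat.factorial (k - a) : ℚ)
      = (Nat.factorial k : ℚ) := by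
    exact_mod_cast congrArg (Nat.cast : ℕ → ℚ) (Nat.choose_mul_factorial_mul_factorial ha')
  have f1 : (Nat.factorial a : ℚ) ≠ 0 := Nat.cast_ne_zero.mpr (Nat.factorial_ne_zero a)
  have f2 : (Nat.factorial (k - a) : ℚ) ≠ 0 := Nat.cast_ne_zero.mpr (Nat.factorial_ne_zero _)
  have f3 : (k.choose a : ℚ) ≠ 0 := Nat.cast_ne_zero.mpr (Nat.choose_pos ha').ne'
  rw [← h]
  field_simp

lemma c_extend (k m a b : ℕ) (ha : a ≤ k) (hb : b ≤ m) :
    (∑ i ∈ Finset.range (min a b + 1), (Nat.factorial i : ℚ) ^ 2 * Sq a i * Sq b i)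
      = ∑ i ∈ Finset.range (min k m + 1), (Nat.factorial i : ℚ) ^ 2 * Sq a i * Sq b i := by
  refine Finset.sum_subset ?_ ?_
  · intro i hi
    simp only [Finset.mem_range] at *
    omega
  · intro i _ hi
    simp only [Finset.mem_range, not_lt] at hi
    rcases (by omega : a < i ∨ b < i) with h | h
    · have : stirling2 (a + 1) (i + 1) = 0 := stirling2_eq_zero _ _ (by omega)
      simp [Sq, this]
    · have : stirling2 (b + 1) (i + 1) = 0 := stirling2_eq_zero _ _ (by omega)
      simp [Sq, this]

lemma telescope (k m : ℕ) :
    ∑ i ∈ Finset.range (min k m + 1),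
      ((Nat.factorial i : ℚ) ^ 2 * ((Sq k i + ((i : ℚ) + 1) * Sq k (i + 1)) * Sq m i)
        + (Nat.factorial i : ℚ) ^ 2 * (Sq k i * (Sq m i + ((i : ℚ) + 1) * Sq m (i + 1)))
        - (Nat.factorial i : ℚ) ^ 2 * ((Sq k i + ((i : ℚ) + 1) * Sq k (i + 1))
            * (Sq m i + ((i : ℚ) + 1) * Sq m (i + 1))))
      = 1 := by
  have step : ∀ i : ℕ,
      ((Nat.factorial i : ℚ) ^ 2 * ((Sq k i + ((i : ℚ) + 1) * Sq k (i + 1)) * Sq m i)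
        + (Nat.factorial i : ℚ) ^ 2 * (Sq k i * (Sq m i + ((i : ℚ) + 1) * Sq m (i + 1)))
        - (Nat.factorial i : ℚ) ^ 2 * ((Sq k i + ((i : ℚ) + 1) * Sq k (i + 1))
            * (Sq m i + ((i : ℚ) + 1) * Sq m (i + 1))))
        = (fun j => (Nat.factorial j : ℚ) ^ 2 * Sq k j * Sq m j) i
          - (fun j => (Nat.factorial j : ℚ) ^ 2 * Sq k j * Sq m j) (i + 1) := by
    intro i
    simp only [Nat.factorial_succ]
    push_cast
    ring
  rw [Finset.sum_congr rfl fun i _ => step i,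
    Finset.sum_range_sub' (fun j => (Nat.factorial j : ℚ) ^ 2 * Sq k j * Sq m j)]
  have h0 : Sq k 0 = 1 := by simp [Sq, stirling2_one]
  have h0' : Sq m 0 = 1 := by simp [Sq, stirling2_one]
  rcases le_total k m with h | h
  · have hz : stirling2 (k + 1) (min k m + 1 + 1) = 0 :=
      stirling2_eq_zero _ _ (by omega)
    simp [h0, h0', Sq, hz, stirling2_one]
  · have hz : stirling2 (m + 1) (min k m + 1 + 1) = 0 :=
      stirling2_eq_zero _ _ (by omega)
    simp [h0, h0', Sq, hz, stirling2_one]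

lemma swap_sum (n N : ℕ) (S2 : ℕ → ℚ) (c1 : ℕ → ℚ)
    (hc1 : ∀ a, a ≤ n → c1 a
      = ∑ i ∈ Finset.range (N + 1), (Nat.factorial i : ℚ) ^ 2 * Sq a i * S2 i) :
    ∑ a ∈ Finset.range (n + 1), (n.choose a : ℚ) * c1 a
      = ∑ i ∈ Finset.range (N + 1),
          (Nat.factorial i : ℚ) ^ 2 * (Sq n i + ((i : ℚ) + 1) * Sq n (i + 1)) * S2 i := by
  have h1 : ∀ a ∈ Finset.range (n + 1), (n.choose a : ℚ) * c1 a
      = ∑ i ∈ Finset.range (N + 1),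
          ((Nat.factorial i : ℚ) ^ 2 * S2 i) * ((n.choose a : ℚ) * Sq a i) := by
    intro a ha
    rw [hc1 a (Nat.lt_succ_iff.mp (Finset.mem_range.mp ha)), Finset.mul_sum]
    exact Finset.sum_congr rfl fun i _ => by ring
  rw [Finset.sum_congr rfl h1, Finset.sum_comm]
  exact Finset.sum_congr rfl fun i _ => by rw [← Finset.mul_sum, hP n i]; ring

lemma keyQ' (k m : ℕ) (c : ℕ → ℕ → ℚ)
    (hc : ∀ a, a ≤ k → ∀ b, b ≤ m → c a b
      = ∑ i ∈ Finset.range (min k m + 1), (Nat.factorial i : ℚ) ^ 2 * Sq a i * Sq b i) :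
    ∑ a ∈ Finset.range (k + 1), ∑ b ∈ Finset.range (m + 1),
      c a b / ((Nat.factorial a : ℚ) * (Nat.factorial b : ℚ))
        * ((if m - b = 0 then 1 / (Nat.factorial (k - a) : ℚ) else 0)
          + (if k - a = 0 then 1 / (Nat.factorial (m - b) : ℚ) else 0)
          - 1 / ((Nat.factorial (k - a) : ℚ) * (Nat.factorial (m - b) : ℚ)))
      = 1 / ((Nat.factorial k : ℚ) * (Nat.factorial m : ℚ)) := by
  have split : ∑ a ∈ Finset.range (k + 1), ∑ b ∈ Finset.range (m + 1),
      c a b / ((Nat.factorial a : ℚ) * (Nat.factorial b : ℚ))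
        * ((if m - b = 0 then 1 / (Nat.factorial (k - a) : ℚ) else 0)
          + (if k - a = 0 then 1 / (Nat.factorial (m - b) : ℚ) else 0)
          - 1 / ((Nat.factorial (k - a) : ℚ) * (Nat.factorial (m - b) : ℚ)))
      = (∑ a ∈ Finset.range (k + 1), ∑ b ∈ Finset.range (m + 1),
          (if m - b = 0 then c a b / ((Nat.factorial a : ℚ) * (Nat.factorial b : ℚ))
            * (1 / (Nat.factorial (k - a) : ℚ)) else 0))
        + (∑ a ∈ Finset.range (k + 1), ∑ b ∈ Finset.range (m + 1),
          (if k - a = 0 then c a b / ((Nat.factorial a : ℚ) * (Nat.factorial b : ℚ))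
            * (1 / (Nat.factorial (m - b) : ℚ)) else 0))
        - ∑ a ∈ Finset.range (k + 1), ∑ b ∈ Finset.range (m + 1),
            c a b / ((Nat.factorial a : ℚ) * (Nat.factorial b : ℚ))
              * (1 / ((Nat.factorial (k - a) : ℚ) * (Nat.factorial (m - b) : ℚ))) := by
    simp only [mul_add, mul_sub, mul_ite, mul_zero, Finset.sum_add_distrib,
      Finset.sum_sub_distrib]
  rw [split]
  have hS1 : ∑ a ∈ Finset.range (k + 1), ∑ b ∈ Finset.range (m + 1),
      (if m - b = 0 then c a b / ((Nat.factorial a : ℚ) * (Nat.factorial b : ℚ))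
        * (1 / (Nat.factorial (k - a) : ℚ)) else 0)
      = (∑ i ∈ Finset.range (min k m + 1),
          (Nat.factorial i : ℚ) ^ 2 * (Sq k i + ((i : ℚ) + 1) * Sq k (i + 1)) * Sq m i)
        / ((Nat.factorial k : ℚ) * (Nat.factorial m : ℚ)) := by
    have inner : ∀ a ∈ Finset.range (k + 1),
        (∑ b ∈ Finset.range (m + 1),
          if m - b = 0 then c a b / ((Nat.factorial a : ℚ) * (Nat.factorial b : ℚ))
            * (1 / (Nat.factorial (k - a) : ℚ)) else 0)
        = (c a m / (Nat.factorial m : ℚ))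
            / ((Nat.factorial a : ℚ) * (Nat.factorial (k - a) : ℚ)) := by
      intro a _
      have e1 : ∀ b ∈ Finset.range (m + 1),
          (if m - b = 0 then c a b / ((Nat.factorial a : ℚ) * (Nat.factorial b : ℚ))
            * (1 / (Nat.factorial (k - a) : ℚ)) else 0)
          = (if b = m then c a b / ((Nat.factorial a : ℚ) * (Nat.factorial b : ℚ))
            * (1 / (Nat.factorial (k - a) : ℚ)) else 0) := by
        intro b hb
        have hb' : b < m + 1 := Finset.mem_range.mp hb
        have : (m - b = 0) = (b = m) := propext (by omega)
        simp only [this]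
      rw [Finset.sum_congr rfl e1, Finset.sum_ite_eq' (Finset.range (m + 1)) m,
        if_pos (Finset.mem_range.mpr (by omega))]
      ring
    rw [Finset.sum_congr rfl inner,
      sum_div_fact k (fun a => c a m / (Nat.factorial m : ℚ))]
    have e2 : ∑ a ∈ Finset.range (k + 1), (k.choose a : ℚ) * (c a m / (Nat.factorial m : ℚ))
        = (∑ a ∈ Finset.range (k + 1), (k.choose a : ℚ) * c a m) / (Nat.factorial m : ℚ) := by
      rw [Finset.sum_div]
      exact Finset.sum_congr rfl fun a _ => by ring
    rw [e2, swap_sum k (min k m) (fun i => Sq m i) (fun a => c a m)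
      (fun a ha => hc a ha m le_rfl)]
    rw [div_div, mul_comm ((Nat.factorial m : ℚ)) ((Nat.factorial k : ℚ))]
  have hS2 : ∑ a ∈ Finset.range (k + 1), ∑ b ∈ Finset.range (m + 1),
      (if k - a = 0 then c a b / ((Nat.factorial a : ℚ) * (Nat.factorial b : ℚ))
        * (1 / (Nat.factorial (m - b) : ℚ)) else 0)
      = (∑ i ∈ Finset.range (min k m + 1),
          (Nat.factorial i : ℚ) ^ 2 * (Sq m i + ((i : ℚ) + 1) * Sq m (i + 1)) * Sq k i)
        / ((Nat.factorial k : ℚ) * (Nat.factorial m : ℚ)) := by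
    rw [Finset.sum_comm]
    have inner : ∀ b ∈ Finset.range (m + 1),
        (∑ a ∈ Finset.range (k + 1),
          if k - a = 0 then c a b / ((Nat.factorial a : ℚ) * (Nat.factorial b : ℚ))
            * (1 / (Nat.factorial (m - b) : ℚ)) else 0)
        = (c k b / (Nat.factorial k : ℚ))
            / ((Nat.factorial b : ℚ) * (Nat.factorial (m - b) : ℚ)) := by
      intro b _
      have e1 : ∀ a ∈ Finset.range (k + 1),
          (if k - a = 0 then c a b / ((Nat.factorial a : ℚ) * (Nat.factorial b : ℚ))
            * (1 / (Nat.factorial (m - b) : ℚ)) else 0)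
          = (if a = k then c a b / ((Nat.factorial a : ℚ) * (Nat.factorial b : ℚ))
            * (1 / (Nat.factorial (m - b) : ℚ)) else 0) := by
        intro a ha
        have ha' : a < k + 1 := Finset.mem_range.mp ha
        have : (k - a = 0) = (a = k) := propext (by omega)
        simp only [this]
      rw [Finset.sum_congr rfl e1, Finset.sum_ite_eq' (Finset.range (k + 1)) k,
        if_pos (Finset.mem_range.mpr (by omega))]
      ring
    rw [Finset.sum_congr rfl inner,
      sum_div_fact m (fun b => c k b / (Nat.factorial k : ℚ))]
    have e2 : ∑ b ∈ Finset.range (m + 1), (m.choose b : ℚ) * (c k b / (Nat.factorial k : ℚ))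
        = (∑ b ∈ Finset.range (m + 1), (m.choose b : ℚ) * c k b) / (Nat.factorial k : ℚ) := by
      rw [Finset.sum_div]
      exact Finset.sum_congr rfl fun b _ => by ring
    rw [e2, swap_sum m (min k m) (fun i => Sq k i) (fun b => c k b)
      (fun b hb => by beta_reduce; rw [hc k le_rfl b hb]; exact Finset.sum_congr rfl fun i _ => by ring)]
    rw [div_div]
  have hS3 : ∑ a ∈ Finset.range (k + 1), ∑ b ∈ Finset.range (m + 1),
      c a b / ((Nat.factorial a : ℚ) * (Nat.factorial b : ℚ))
        * (1 / ((Nat.factorial (k - a) : ℚ) * (Nat.factorial (m - b) : ℚ)))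
      = (∑ i ∈ Finset.range (min k m + 1),
          (Nat.factorial i : ℚ) ^ 2 * (Sq k i + ((i : ℚ) + 1) * Sq k (i + 1))
            * ((Sq m i + ((i : ℚ) + 1) * Sq m (i + 1))))
        / ((Nat.factorial k : ℚ) * (Nat.factorial m : ℚ)) := by
    have inner : ∀ a ∈ Finset.range (k + 1),
        (∑ b ∈ Finset.range (m + 1),
          c a b / ((Nat.factorial a : ℚ) * (Nat.factorial b : ℚ))
            * (1 / ((Nat.factorial (k - a) : ℚ) * (Nat.factorial (m - b) : ℚ))))
        = ((∑ b ∈ Finset.range (m + 1), (m.choose b : ℚ) * c a b) / (Nat.factorial m : ℚ))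
            / ((Nat.factorial a : ℚ) * (Nat.factorial (k - a) : ℚ)) := by
      intro a _
      have e1 : ∀ b ∈ Finset.range (m + 1),
          c a b / ((Nat.factorial a : ℚ) * (Nat.factorial b : ℚ))
            * (1 / ((Nat.factorial (k - a) : ℚ) * (Nat.factorial (m - b) : ℚ)))
          = (c a b / ((Nat.factorial a : ℚ) * (Nat.factorial (k - a) : ℚ)))
              / ((Nat.factorial b : ℚ) * (Nat.factorial (m - b) : ℚ)) := by
        intro b _
        ring
      rw [Finset.sum_congr rfl e1,
        sum_div_fact m (fun b => c a b / ((Nat.factorial a : ℚ) * (Nat.factorial (k - a) : ℚ)))]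
      have e2 : ∑ b ∈ Finset.range (m + 1),
          (m.choose b : ℚ) * (c a b / ((Nat.factorial a : ℚ) * (Nat.factorial (k - a) : ℚ)))
          = (∑ b ∈ Finset.range (m + 1), (m.choose b : ℚ) * c a b)
              / ((Nat.factorial a : ℚ) * (Nat.factorial (k - a) : ℚ)) := by
        rw [Finset.sum_div]
        exact Finset.sum_congr rfl fun b _ => by ring
      rw [e2]
      ring
    rw [Finset.sum_congr rfl inner,
      sum_div_fact k (fun a =>
        (∑ b ∈ Finset.range (m + 1), (m.choose b : ℚ) * c a b) / (Nat.factorial m : ℚ))]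
    have e2 : ∑ a ∈ Finset.range (k + 1),
        (k.choose a : ℚ) * ((∑ b ∈ Finset.range (m + 1), (m.choose b : ℚ) * c a b)
          / (Nat.factorial m : ℚ))
        = (∑ a ∈ Finset.range (k + 1),
            (k.choose a : ℚ) * (∑ b ∈ Finset.range (m + 1), (m.choose b : ℚ) * c a b))
            / (Nat.factorial m : ℚ) := by
      rw [Finset.sum_div]
      exact Finset.sum_congr rfl fun a _ => by ring
    rw [e2, swap_sum k (min k m)
      (fun i => Sq m i + ((i : ℚ) + 1) * Sq m (i + 1))
      (fun a => ∑ b ∈ Finset.range (m + 1), (m.choose b : ℚ) * c a b)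
      (fun a ha => by
        beta_reduce
        rw [swap_sum m (min k m) (fun i => Sq a i) (fun b => c a b)
          (fun b hb => by beta_reduce; rw [hc a ha b hb]; exact Finset.sum_congr rfl fun i _ => by ring)]
        exact Finset.sum_congr rfl fun i _ => by ring)]
    rw [div_div, mul_comm ((Nat.factorial m : ℚ)) ((Nat.factorial k : ℚ))]
  rw [hS1, hS2, hS3, ← add_div, ← sub_div]
  have final : (∑ i ∈ Finset.range (min k m + 1),
        (Nat.factorial i : ℚ) ^ 2 * (Sq k i + ((i : ℚ) + 1) * Sq k (i + 1)) * Sq m i)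
      + (∑ i ∈ Finset.range (min k m + 1),
        (Nat.factorial i : ℚ) ^ 2 * (Sq m i + ((i : ℚ) + 1) * Sq m (i + 1)) * Sq k i)
      - ∑ i ∈ Finset.range (min k m + 1),
        (Nat.factorial i : ℚ) ^ 2 * (Sq k i + ((i : ℚ) + 1) * Sq k (i + 1))
          * ((Sq m i + ((i : ℚ) + 1) * Sq m (i + 1))) = 1 := by
    rw [← Finset.sum_add_distrib, ← Finset.sum_sub_distrib]
    refine Eq.trans (Finset.sum_congr rfl fun i _ => ?_) (telescope k m)
    ring
  rw [final]

noncomputable def F2 (a b : ℕ) : Fin 2 →₀ ℕ := Finsupp.single 0 a + Finsupp.single 1 b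

lemma F2_apply0 (a b : ℕ) : F2 a b 0 = a := by
  simp [F2, Finsupp.single_apply]

lemma F2_apply1 (a b : ℕ) : F2 a b 1 = b := by
  simp [F2, Finsupp.single_apply]

lemma eq_F2 (d : Fin 2 →₀ ℕ) : d = F2 (d 0) (d 1) :=
  Finsupp.ext (Fin.forall_fin_two.mpr ⟨(F2_apply0 _ _).symm, (F2_apply1 _ _).symm⟩)

lemma snd_eq (d : Fin 2 →₀ ℕ) (p : (Fin 2 →₀ ℕ) × (Fin 2 →₀ ℕ)) (hp : p.1 + p.2 = d) :
    p.2 = F2 (d 0 - p.1 0) (d 1 - p.1 1) := by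
  have h0 : p.1 0 + p.2 0 = d 0 := by rw [← hp]; simp
  have h1 : p.1 1 + p.2 1 = d 1 := by rw [← hp]; simp
  rw [eq_F2 p.2]
  congr 1 <;> omega

lemma antidiag_sum (d : Fin 2 →₀ ℕ) (h : (Fin 2 →₀ ℕ) → (Fin 2 →₀ ℕ) → ℚ) :
    ∑ p ∈ Finset.HasAntidiagonal.antidiagonal d, h p.1 p.2
      = ∑ a ∈ Finset.range (d 0 + 1), ∑ b ∈ Finset.range (d 1 + 1),
          h (F2 a b) (F2 (d 0 - a) (d 1 - b)) := by
  rw [← Finset.sum_product']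
  refine Finset.sum_nbij' (fun p => (p.1 0, p.1 1))
    (fun q => (F2 q.1 q.2, F2 (d 0 - q.1) (d 1 - q.2))) ?_ ?_ ?_ ?_ ?_
  · intro p hp
    have hp' := Finset.HasAntidiagonal.mem_antidiagonal.mp hp
    have h0 : p.1 0 + p.2 0 = d 0 := by rw [← hp']; simp
    have h1 : p.1 1 + p.2 1 = d 1 := by rw [← hp']; simp
    simp only [Finset.mem_product, Finset.mem_range]
    omega
  · intro q hq
    simp only [Finset.mem_product, Finset.mem_range] at hq
    rw [Finset.HasAntidiagonal.mem_antidiagonal]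
    refine Finsupp.ext (Fin.forall_fin_two.mpr ⟨?_, ?_⟩) <;>
      simp [F2_apply0, F2_apply1] <;> omega
  · intro p hp
    have hp' := Finset.HasAntidiagonal.mem_antidiagonal.mp hp
    have e1 : F2 (p.1 0) (p.1 1) = p.1 := (eq_F2 p.1).symm
    have e2 : F2 (d 0 - p.1 0) (d 1 - p.1 1) = p.2 := (snd_eq d p hp').symm
    simp only [e1, e2]
  · intro q hq
    simp [F2_apply0, F2_apply1]
  · intro p hp
    have hp' := Finset.HasAntidiagonal.mem_antidiagonal.mp hp
    have e1 : F2 (p.1 0) (p.1 1) = p.1 := (eq_F2 p.1).symm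
    have e2 : F2 (d 0 - p.1 0) (d 1 - p.1 1) = p.2 := (snd_eq d p hp').symm
    simp only [e1, e2]


/-- The exponential bivariate generating function identity
`Σ_{k,m} (Σ_i (i!)² S_{k+1,i+1} S_{m+1,i+1}) xᵏ yᵐ / (k! m!) = e^{x+y} / (eˣ + eʸ - e^{x+y})`
in `ℚ[[x,y]]`, where `d 0` is the exponent of `x` and `d 1` the exponent of `y`. -/
theorem generating_function_identity :
    (fun d : Fin 2 →₀ ℕ =>
        (∑ i ∈ Finset.range (min (d 0) (d 1) + 1),
          (Nat.factorial i : ℚ) ^ 2 * (stirling2 (d 0 + 1) (i + 1) : ℚ) *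
            (stirling2 (d 1 + 1) (i + 1) : ℚ)) /
          ((Nat.factorial (d 0) : ℚ) * (Nat.factorial (d 1) : ℚ)) : MvPowerSeries (Fin 2) ℚ) =
      expXY * (expX + expY - expXY)⁻¹ := by
  set L : MvPowerSeries (Fin 2) ℚ := (fun d : Fin 2 →₀ ℕ =>
        (∑ i ∈ Finset.range (min (d 0) (d 1) + 1),
          (Nat.factorial i : ℚ) ^ 2 * (stirling2 (d 0 + 1) (i + 1) : ℚ) *
            (stirling2 (d 1 + 1) (i + 1) : ℚ)) /
          ((Nat.factorial (d 0) : ℚ) * (Nat.factorial (d 1) : ℚ))) with hLdef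
  set B : MvPowerSeries (Fin 2) ℚ := expX + expY - expXY with hBdef
  have hBc : MvPowerSeries.constantCoeff B ≠ 0 := by
    have h1 : MvPowerSeries.constantCoeff B = 1 := by
      rw [hBdef, map_sub, map_add]
      show expX 0 + expY 0 - expXY 0 = 1
      simp [expX, expY, expXY]
    rw [h1]; exact one_ne_zero
  have hmul : L * B = expXY := by
    apply MvPowerSeries.ext
    intro d
    rw [MvPowerSeries.coeff_mul]
    have hterm : ∀ p : (Fin 2 →₀ ℕ) × (Fin 2 →₀ ℕ),
        MvPowerSeries.coeff p.1 L * MvPowerSeries.coeff p.2 B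
          = (fun u v => L u * (expX v + expY v - expXY v)) p.1 p.2 := by
      intro p
      rw [MvPowerSeries.coeff_apply, hBdef, map_sub, map_add,
        MvPowerSeries.coeff_apply, MvPowerSeries.coeff_apply, MvPowerSeries.coeff_apply]
    rw [Finset.sum_congr rfl fun p _ => hterm p,
      antidiag_sum d (fun u v => L u * (expX v + expY v - expXY v))]
    have hcoe : MvPowerSeries.coeff d expXY
        = 1 / ((Nat.factorial (d 0) : ℚ) * (Nat.factorial (d 1) : ℚ)) := by
      rw [MvPowerSeries.coeff_apply]; rfl
    rw [hcoe]
    have hsummand : ∀ a b : ℕ,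
        L (F2 a b) * (expX (F2 (d 0 - a) (d 1 - b)) + expY (F2 (d 0 - a) (d 1 - b))
          - expXY (F2 (d 0 - a) (d 1 - b)))
        = (∑ i ∈ Finset.range (min a b + 1),
              (Nat.factorial i : ℚ) ^ 2 * Sq a i * Sq b i)
            / ((Nat.factorial a : ℚ) * (Nat.factorial b : ℚ))
            * ((if d 1 - b = 0 then 1 / (Nat.factorial (d 0 - a) : ℚ) else 0)
              + (if d 0 - a = 0 then 1 / (Nat.factorial (d 1 - b) : ℚ) else 0)
              - 1 / ((Nat.factorial (d 0 - a) : ℚ) * (Nat.factorial (d 1 - b) : ℚ))) := by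
      intro a b
      rw [hLdef]
      simp only [expX, expY, expXY, F2_apply0, F2_apply1, Sq]
    rw [Finset.sum_congr rfl fun a _ => Finset.sum_congr rfl fun b _ => hsummand a b]
    exact keyQ' (d 0) (d 1)
      (fun a b => ∑ i ∈ Finset.range (min a b + 1), (Nat.factorial i : ℚ) ^ 2 * Sq a i * Sq b i)
      (fun a ha b hb => c_extend (d 0) (d 1) a b ha hb)
  have hinv : B * B⁻¹ = 1 := MvPowerSeries.mul_inv_cancel B hBc
  calc L = L * 1 := (mul_one L).symm
    _ = L * (B * B⁻¹) := by rw [hinv]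
    _ = (L * B) * B⁻¹ := (mul_assoc L B B⁻¹).symm
    _ = expXY * B⁻¹ := by rw [hmul]
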